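/- arXiv:2403.09248 — 3 statements merged into one kernel-verified Lean document; each statement's English description precedes it below -/
import Mathlib

section
/- Let G be a finite simple graph. Then rank(EMH_{2,2}(G)) ≤ 6·c(G,C_3) + 4·c(G,C_4) + 2·c(G,F_4), where C_3 and C_4 are the cycle graphs on 3 and 4 vertices and F_4 is the graph on 4 vertices obtained from C_4 by adding one diagonal (4 vertices and 5 edges). -/
open scoped Classical

variable {V : Type*}

/-- Length of the walk described by a list of landmarks: sum of path-metric
distances between consecutive entries (`⊤`-valued if some pair is unreachable). -/
noncomputable def mlen (G : SimpleGraph V) : List V → ℕ∞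
  | [] => 0
  | [_] => 0
  | a :: b :: t => G.edist a b + mlen G (b :: t)

/-- A list of landmarks is a trail if consecutive entries are distinct and reachable. -/
def IsTrailList (G : SimpleGraph V) (l : List V) : Prop :=
  l.Chain' fun a b => a ≠ b ∧ G.Reachable a b

/-- `trails G k ℓ` is the set `T_{k,ℓ}(G)` of `k`-trails of length `ℓ`,
encoded as lists with `k+1` entries. -/
def trails (G : SimpleGraph V) (k ℓ : ℕ) : Set (List V) :=
  {l | l.length = k + 1 ∧ IsTrailList G l ∧ mlen G l = (ℓ : ℕ∞)}

/-- `etrails G k ℓ` is the set `ET_{k,ℓ}(G)` of eulerian `k`-trails of length `ℓ`. -/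
def etrails (G : SimpleGraph V) (k ℓ : ℕ) : Set (List V) :=
  {l | l ∈ trails G k ℓ ∧ l.Nodup}

/-- Boundary of a single generator: `∂_{·,ℓ}(x₀,…,x_k) = Σ_{i=1}^{k-1} (-1)^i ∂^i`,
where `∂^i` deletes the `i`-th landmark if this does not change the length. -/
noncomputable def bdryElt (G : SimpleGraph V) (ℓ : ℕ) (l : List V) : List V →₀ ℤ :=
  ∑ i ∈ Finset.Ioo 0 (l.length - 1),
    if mlen G (l.eraseIdx i) = (ℓ : ℕ∞) then ((-1 : ℤ) ^ i) • Finsupp.single (l.eraseIdx i) 1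
    else 0

/-- The magnitude differential (length parameter `ℓ`) on the ambient free abelian group
on all landmark lists.  Its restriction to `MC_{k,ℓ}(G)` (chains supported on
`trails G k ℓ`) is `∂_{k,ℓ}`. -/
noncomputable def bdry (G : SimpleGraph V) (ℓ : ℕ) : (List V →₀ ℤ) →ₗ[ℤ] (List V →₀ ℤ) :=
  Finsupp.lsum ℤ fun l => LinearMap.toSpanSingleton ℤ _ (bdryElt G ℓ l)

/-- `MC_{k,ℓ}(G)`: the free abelian group on `T_{k,ℓ}(G)`, realized as the submodule of
finitely supported `ℤ`-valued functions supported on trails. -/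
noncomputable def MC (G : SimpleGraph V) (k ℓ : ℕ) : Submodule ℤ (List V →₀ ℤ) :=
  Finsupp.supported ℤ ℤ (trails G k ℓ)

/-- `EMC_{k,ℓ}(G)`: the free abelian group on `ET_{k,ℓ}(G)`. -/
noncomputable def EMC (G : SimpleGraph V) (k ℓ : ℕ) : Submodule ℤ (List V →₀ ℤ) :=
  Finsupp.supported ℤ ℤ (etrails G k ℓ)

/-- `EMH_{k,k}(G) = ker(∂_{k,k}|_{EMC_{k,k}(G)})`, the first-diagonal eulerian magnitude
homology group (`EMC_{k+1,k}(G) = 0`, so homology is just the kernel). -/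
noncomputable def EMHkk (G : SimpleGraph V) (k : ℕ) : Submodule ℤ (List V →₀ ℤ) :=
  EMC G k k ⊓ LinearMap.ker (bdry G k)

/-- `MH_{k,k}(G) = ker(∂_{k,k}|_{MC_{k,k}(G)})`. -/
noncomputable def MHkk (G : SimpleGraph V) (k : ℕ) : Submodule ℤ (List V →₀ ℤ) :=
  MC G k k ⊓ LinearMap.ker (bdry G k)

/-- `β_{k,k}(G)`, the rank of `EMH_{k,k}(G)`. -/
noncomputable def emBetti (G : SimpleGraph V) (k : ℕ) : ℕ :=
  Module.finrank ℤ (EMHkk G k)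

/-- `c(G,H)`: the number of vertex subsets of `G` whose induced subgraph is isomorphic
to `H`. -/
noncomputable def subgraphCount (G : SimpleGraph V) {W : Type*} (H : SimpleGraph W) : ℕ :=
  Set.ncard {s : Set V | Nonempty ((G.induce s) ≃g H)}

/-- `F₄`: the cycle graph on 4 vertices with one diagonal added (4 vertices, 5 edges). -/
def F4 : SimpleGraph (Fin 4) :=
  SimpleGraph.cycleGraph 4 ⊔ SimpleGraph.fromRel fun a b => a = 0 ∧ b = 2

section MyAux

variable {V : Type*}

private lemma enat_split {x y : ℕ∞} (hx : x ≠ 0) (hy : y ≠ 0) (h : x + y = 2) :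
    x = 1 ∧ y = 1 := by
  have hx' : x ≠ ⊤ := by
    rintro rfl; simp [top_add] at h
  have hy' : y ≠ ⊤ := by
    rintro rfl; simp [add_top] at h
  lift x to ℕ using hx'
  lift y to ℕ using hy'
  have h2 : ((x + y : ℕ) : ℕ∞) = ((2 : ℕ) : ℕ∞) := by push_cast; exact_mod_cast h
  have hx0 : x ≠ 0 := by exact_mod_cast hx
  have hy0 : y ≠ 0 := by exact_mod_cast hy
  have := Nat.cast_injective (R := ℕ∞) h2
  constructor <;> · norm_cast; omega

lemma mem_etrails22 {G : SimpleGraph V} {l : List V} :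
    l ∈ etrails G 2 2 ↔
      ∃ a b c : V, l = [a, b, c] ∧ G.Adj a b ∧ G.Adj b c ∧ a ≠ c := by
  constructor
  · rintro ⟨⟨hlen, htrail, hmlen⟩, hnodup⟩
    obtain ⟨a, b, c, rfl⟩ : ∃ a b c : V, l = [a, b, c] := by
      match l, hlen with
      | [a, b, c], _ => exact ⟨a, b, c, rfl⟩
    simp only [IsTrailList, List.Chain', List.isChain_cons_cons, List.isChain_singleton, and_true] at htrail
    obtain ⟨⟨hab, hrab⟩, hbc, hrbc⟩ := htrail
    have hmlen' : G.edist a b + G.edist b c = 2 := by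
      simpa [mlen] using hmlen
    have h1 : G.edist a b = 1 ∧ G.edist b c = 1 :=
      enat_split (by simpa using (SimpleGraph.edist_eq_zero_iff (G := G)).ne.mpr hab)
        (by simpa using (SimpleGraph.edist_eq_zero_iff (G := G)).ne.mpr hbc) hmlen'
    refine ⟨a, b, c, rfl, ?_, ?_, ?_⟩
    · exact (SimpleGraph.edist_eq_one_iff_adj).mp h1.1
    · exact (SimpleGraph.edist_eq_one_iff_adj).mp h1.2
    · intro h; subst h; simp at hnodup
  · rintro ⟨a, b, c, rfl, hab, hbc, hac⟩
    refine ⟨⟨rfl, ?_, ?_⟩, ?_⟩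
    · simp only [IsTrailList, List.Chain', List.isChain_cons_cons, List.isChain_singleton, and_true]
      exact ⟨⟨hab.ne, hab.reachable⟩, hbc.ne, hbc.reachable⟩
    · simp [mlen, SimpleGraph.edist_eq_one_iff_adj.mpr hab,
        SimpleGraph.edist_eq_one_iff_adj.mpr hbc]
      rfl
    · simp [hab.ne, hbc.ne, hac]

lemma bdryElt_three {G : SimpleGraph V} (a b c : V) :
    bdryElt G 2 [a, b, c] =
      if G.edist a c = 2 then -Finsupp.single [a, c] 1 else 0 := by
  have h3 : mlen G ([a, b, c].eraseIdx 1) = G.edist a c := by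
    show G.edist a c + mlen G [c] = _
    show G.edist a c + 0 = _
    simp
  rw [bdryElt, show [a, b, c].length - 1 = 2 from rfl,
    show Finset.Ioo 0 2 = ({1} : Finset ℕ) from by decide, Finset.sum_singleton, h3,
    show [a, b, c].eraseIdx 1 = [a, c] from rfl,
    show ((2 : ℕ) : ℕ∞) = (2 : ℕ∞) from by norm_cast]
  split <;> simp

end MyAux

section MyAux2

variable {V : Type*}

/-- A canonical common neighbor. -/
noncomputable def canonMid (G : SimpleGraph V) (x z : V) : V :=
  if h : ∃ y, G.Adj x y ∧ G.Adj y z then h.choose else x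

lemma canonMid_spec {G : SimpleGraph V} {x y z : V} (h1 : G.Adj x y) (h2 : G.Adj y z) :
    G.Adj x (canonMid G x z) ∧ G.Adj (canonMid G x z) z := by
  have h : ∃ w, G.Adj x w ∧ G.Adj w z := ⟨y, h1, h2⟩
  rw [canonMid, dif_pos h]
  exact h.choose_spec

/-- Triangle trails. -/
def TriT (G : SimpleGraph V) : Set (List V) :=
  {l | ∃ a b c : V, l = [a, b, c] ∧ G.Adj a b ∧ G.Adj b c ∧ G.Adj a c}

/-- Non-canonical distance-two trails. -/
def YT (G : SimpleGraph V) : Set (List V) :=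
  {l | ∃ a b c : V, l = [a, b, c] ∧ G.Adj a b ∧ G.Adj b c ∧ ¬G.Adj a c ∧ a ≠ c ∧
    b ≠ canonMid G a c}

lemma edist_eq_two {G : SimpleGraph V} {a c : V} (h : ¬G.Adj a c) (hne : a ≠ c) {b : V}
    (h1 : G.Adj a b) (h2 : G.Adj b c) : G.edist a c = 2 := by
  have hle : G.edist a c ≤ 2 := by
    calc G.edist a c ≤ G.edist a b + G.edist b c := G.edist_triangle
    _ = 2 := by
        rw [SimpleGraph.edist_eq_one_iff_adj.mpr h1, SimpleGraph.edist_eq_one_iff_adj.mpr h2]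
        rfl
  have h0 : G.edist a c ≠ 0 := (SimpleGraph.edist_eq_zero_iff (G := G)).ne.mpr hne
  have h1' : G.edist a c ≠ 1 := fun hh => h (SimpleGraph.edist_eq_one_iff_adj.mp hh)
  have htop : G.edist a c ≠ ⊤ := fun hh => by rw [hh] at hle; exact (by simp : ¬(⊤ : ℕ∞) ≤ 2) hle
  lift G.edist a c to ℕ using htop with d hd
  have hle' : d ≤ 2 := by exact_mod_cast hle
  have h0' : d ≠ 0 := by exact_mod_cast h0
  have h1'' : d ≠ 1 := by exact_mod_cast h1'
  have : d = 2 := by omega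
  exact_mod_cast congrArg (Nat.cast : ℕ → ℕ∞) this

lemma emh_eq_zero {G : SimpleGraph V} {f : List V →₀ ℤ}
    (hf : f ∈ EMHkk G 2) (hS : ∀ l ∈ TriT G ∪ YT G, f l = 0) : f = 0 := by
  obtain ⟨hmem, hker⟩ := hf
  have hsub : ↑f.support ⊆ etrails G 2 2 := (Finsupp.mem_supported ℤ f).mp hmem
  have hker' : bdry G 2 f = 0 := hker
  -- structure of the support
  have hstruct : ∀ l ∈ f.support, ∃ a c : V, l = [a, canonMid G a c, c] ∧
      ¬G.Adj a c ∧ a ≠ c ∧ G.Adj a (canonMid G a c) ∧ G.Adj (canonMid G a c) c := by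
    intro l hl
    obtain ⟨a, b, c, rfl, hab, hbc, hac⟩ := mem_etrails22.mp (hsub hl)
    have hfl : f [a, b, c] ≠ 0 := Finsupp.mem_support_iff.mp hl
    by_cases hadj : G.Adj a c
    · exact absurd (hS _ (Or.inl ⟨a, b, c, rfl, hab, hbc, hadj⟩)) hfl
    by_cases hcan : b = canonMid G a c
    · subst hcan
      exact ⟨a, c, rfl, hadj, hac, canonMid_spec hab hbc⟩
    · exact absurd (hS _ (Or.inr ⟨a, b, c, rfl, hab, hbc, hadj, hac, hcan⟩)) hfl
  ext l
  by_contra hne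
  have hl : l ∈ f.support := Finsupp.mem_support_iff.mpr (by simpa using hne)
  obtain ⟨a, c, hleq, hac, hnac, h1, h2⟩ := hstruct l hl
  -- evaluate the boundary at [a, c]
  have hexp : bdry G 2 f = f.sum fun m d => d • bdryElt G 2 m := by
    rw [bdry, Finsupp.lsum_apply]; rfl
  have h0 : (f.sum fun m d => d • bdryElt G 2 m) [a, c] = 0 := by
    rw [← hexp, hker']; rfl
  rw [Finsupp.sum_apply] at h0
  have hterm : ∀ m ∈ f.support, m ≠ l → (f m • bdryElt G 2 m) [a, c] = 0 := by
    intro m hm hml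
    obtain ⟨a', c', hmeq, hac', hnac', h1', h2'⟩ := hstruct m hm
    have hd2 : G.edist a' c' = 2 := edist_eq_two hac' hnac' h1' h2'
    rw [hmeq, bdryElt_three, if_pos hd2]
    have hne' : [a', c'] ≠ [a, c] := by
      intro hh
      apply hml
      obtain ⟨rfl, rfl⟩ : a' = a ∧ c' = c := by simpa using hh
      rw [hmeq, hleq]
    simp [Finsupp.single_apply, hne']
  have hsum : (Finsupp.sum f fun m d => (d • bdryElt G 2 m) [a, c]) = f l * (-1) := by
    rw [Finsupp.sum]
    rw [Finset.sum_eq_single_of_mem l hl (fun m hm hml => hterm m hm hml)]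
    rw [hleq, bdryElt_three, if_pos (edist_eq_two hac hnac h1 h2)]
    simp
  rw [hsum] at h0
  simp at h0
  exact hne (by simpa using h0)

lemma finrank_le_card_S [Fintype V] (G : SimpleGraph V) :
    Module.finrank ℤ (EMHkk G 2) ≤ Nat.card ↥(TriT G ∪ YT G) := by
  set S : Set (List V) := TriT G ∪ YT G with hSdef
  have hSfin : S.Finite := by
    apply Set.Finite.subset (Set.finite_range fun p : V × V × V => [p.1, p.2.1, p.2.2])
    rintro l (⟨a, b, c, rfl, -⟩ | ⟨a, b, c, rfl, -⟩) <;> exact ⟨(a, b, c), rfl⟩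
  haveI : Finite ↥S := hSfin.to_subtype
  haveI : Module.Finite ℤ (↥S →₀ ℤ) :=
    Module.Finite.equiv (Finsupp.linearEquivFunOnFinite ℤ ℤ ↥S).symm
  let g : ↥(EMHkk G 2) →ₗ[ℤ] (↥S →₀ ℤ) :=
    ((Finsupp.supportedEquivFinsupp (M := ℤ) (R := ℤ) S).toLinearMap.comp
      (Finsupp.restrictDom ℤ ℤ S)).comp (EMHkk G 2).subtype
  have hginj : Function.Injective g := by
    rw [← LinearMap.ker_eq_bot, LinearMap.ker_eq_bot']
    rintro ⟨f, hf⟩ hg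
    have h1 : (Finsupp.restrictDom ℤ ℤ S) f = 0 := by
      apply (Finsupp.supportedEquivFinsupp (M := ℤ) (R := ℤ) S).injective
      rw [map_zero]
      exact hg
    have h2 : ∀ l ∈ S, f l = 0 := by
      intro l hl
      have h3 : ((Finsupp.restrictDom ℤ ℤ S f : Finsupp.supported ℤ ℤ S) : List V →₀ ℤ) l
          = 0 := by rw [h1]; rfl
      rwa [Finsupp.restrictDom_apply, Finsupp.filter_apply_pos _ _ hl] at h3
    exact Subtype.ext (emh_eq_zero hf h2)
  calc Module.finrank ℤ (EMHkk G 2) ≤ Module.finrank ℤ (↥S →₀ ℤ) :=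
        LinearMap.finrank_le_finrank_of_injective hginj
    _ = Nat.card ↥S := by
        haveI : Fintype ↥S := hSfin.fintype
        rw [Module.finrank_finsupp_self, Nat.card_eq_fintype_card]

end MyAux2

section MyAux3

variable {V : Type*}

noncomputable def equivTriple {a b c : V} (hab : a ≠ b) (hac : a ≠ c) (hbc : b ≠ c) :
    ↥({a, b, c} : Set V) ≃ Fin 3 where
  toFun v := if (v : V) = a then 0 else if (v : V) = b then 1 else 2
  invFun i := if i = 0 then ⟨a, by simp⟩ else if i = 1 then ⟨b, by simp⟩ else ⟨c, by simp⟩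
  left_inv := by
    rintro ⟨v, hv⟩
    simp only [Set.mem_insert_iff, Set.mem_singleton_iff] at hv
    rcases hv with rfl | rfl | rfl <;> simp [hab, hac, hbc, hab.symm, hac.symm, hbc.symm]
  right_inv := by
    intro i
    fin_cases i <;> simp [hab, hac, hbc, hab.symm, hac.symm, hbc.symm]

lemma nonempty_iso_c3 (G : SimpleGraph V) {a b c : V}
    (hab : G.Adj a b) (hbc : G.Adj b c) (hac : G.Adj a c) :
    Nonempty (G.induce ({a, b, c} : Set V) ≃g SimpleGraph.cycleGraph 3) := by
  refine ⟨⟨equivTriple hab.ne hac.ne hbc.ne, ?_⟩⟩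
  rintro ⟨x, hx⟩ ⟨y, hy⟩
  simp only [Set.mem_insert_iff, Set.mem_singleton_iff] at hx hy
  rcases hx with rfl | rfl | rfl <;> rcases hy with rfl | rfl | rfl <;>
    simp [equivTriple, hab, hbc, hac, hab.ne, hac.ne, hbc.ne,
      hab.ne.symm, hac.ne.symm, hbc.ne.symm, hab.symm, hbc.symm, hac.symm,
      SimpleGraph.comap_adj] <;> decide

noncomputable def equivQuad {a b c d : V} (hab : a ≠ b) (hac : a ≠ c) (had : a ≠ d)
    (hbc : b ≠ c) (hbd : b ≠ d) (hcd : c ≠ d) :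
    ↥({a, b, c, d} : Set V) ≃ Fin 4 where
  toFun v := if (v : V) = a then 0 else if (v : V) = b then 1 else if (v : V) = c then 2 else 3
  invFun i := if i = 0 then ⟨a, by simp⟩ else if i = 1 then ⟨b, by simp⟩
    else if i = 2 then ⟨c, by simp⟩ else ⟨d, by simp⟩
  left_inv := by
    rintro ⟨v, hv⟩
    simp only [Set.mem_insert_iff, Set.mem_singleton_iff] at hv
    rcases hv with rfl | rfl | rfl | rfl <;>
      simp [hab, hac, had, hbc, hbd, hcd, hab.symm, hac.symm, had.symm, hbc.symm,
        hbd.symm, hcd.symm]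
  right_inv := by
    intro i
    fin_cases i <;>
      simp [hab, hac, had, hbc, hbd, hcd, hab.symm, hac.symm, had.symm, hbc.symm,
        hbd.symm, hcd.symm]

/-- `{a,b,c,d}` with edges `ab, bc, cd, da` and non-edges `ac, bd` induces a 4-cycle. -/
lemma nonempty_iso_c4 (G : SimpleGraph V) {a b c d : V}
    (hab : G.Adj a b) (hbc : G.Adj b c) (hcd : G.Adj c d) (had : G.Adj a d)
    (hnac : ¬G.Adj a c) (hnbd : ¬G.Adj b d) (hac : a ≠ c) (hbd : b ≠ d) :
    Nonempty (G.induce ({a, b, c, d} : Set V) ≃g SimpleGraph.cycleGraph 4) := by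
  have hnca : ¬G.Adj c a := fun h => hnac h.symm
  have hndb : ¬G.Adj d b := fun h => hnbd h.symm
  refine ⟨⟨equivQuad hab.ne hac had.ne hbc.ne hbd hcd.ne, ?_⟩⟩
  rintro ⟨x, hx⟩ ⟨y, hy⟩
  simp only [Set.mem_insert_iff, Set.mem_singleton_iff] at hx hy
  rcases hx with rfl | rfl | rfl | rfl <;> rcases hy with rfl | rfl | rfl | rfl <;>
    simp [equivQuad, hab, hbc, hcd, had, hnac, hnbd, hac, hbd,
      hab.ne, had.ne, hbc.ne, hcd.ne, hab.ne.symm, had.ne.symm, hbc.ne.symm, hcd.ne.symm,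
      hac.symm, hbd.symm, hab.symm, hbc.symm, hcd.symm, had.symm, hnca, hndb,
      SimpleGraph.comap_adj] <;> try decide

/-- `{a,b,c,d}` with edges `ab, bc, cd, da, ac` and non-edge `bd` induces `F4`
(under the labelling `a↦0, b↦1, c↦2, d↦3`). -/
lemma nonempty_iso_f4 (G : SimpleGraph V) {a b c d : V}
    (hab : G.Adj a b) (hbc : G.Adj b c) (hcd : G.Adj c d) (had : G.Adj a d)
    (hac : G.Adj a c) (hnbd : ¬G.Adj b d) (hbd : b ≠ d) :
    Nonempty (G.induce ({a, b, c, d} : Set V) ≃g F4) := by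
  have hndb : ¬G.Adj d b := fun h => hnbd h.symm
  refine ⟨⟨equivQuad hab.ne hac.ne had.ne hbc.ne hbd hcd.ne, ?_⟩⟩
  rintro ⟨x, hx⟩ ⟨y, hy⟩
  simp only [Set.mem_insert_iff, Set.mem_singleton_iff] at hx hy
  rcases hx with rfl | rfl | rfl | rfl <;> rcases hy with rfl | rfl | rfl | rfl <;>
    simp [equivQuad, F4, hab, hbc, hcd, had, hac, hnbd, hbd,
      hab.ne, had.ne, hbc.ne, hcd.ne, hac.ne, hab.ne.symm, had.ne.symm, hbc.ne.symm,
      hcd.ne.symm, hac.ne.symm, hbd.symm, hab.symm, hbc.symm, hcd.symm, had.symm, hac.symm,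
      hndb, SimpleGraph.comap_adj] <;> try decide

end MyAux3

section MyAux4

variable {V : Type*}

lemma pair_filter_ncard [LinearOrder V] {b c x : V} (hbc : b ≠ c) :
    ({w ∈ ({b, c} : Set V) | w < x}).ncard =
      (if b < x then 1 else 0) + (if c < x then 1 else 0) := by
  split_ifs with h1 h2 h2
  · rw [show {w ∈ ({b, c} : Set V) | w < x} = {b, c} from by
      ext w
      simp only [Set.sep_setOf, Set.mem_setOf_eq, Set.mem_insert_iff, Set.mem_singleton_iff]
      constructor
      · tauto
      · rintro (rfl | rfl) <;> simp [h1, h2]]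
    exact Set.ncard_pair hbc
  · rw [show {w ∈ ({b, c} : Set V) | w < x} = {b} from by
      ext w
      simp only [Set.sep_setOf, Set.mem_setOf_eq, Set.mem_insert_iff, Set.mem_singleton_iff]
      constructor
      · rintro ⟨rfl | rfl, h⟩ <;> tauto
      · rintro rfl; simp [h1]]
    simp
  · rw [show {w ∈ ({b, c} : Set V) | w < x} = {c} from by
      ext w
      simp only [Set.sep_setOf, Set.mem_setOf_eq, Set.mem_insert_iff, Set.mem_singleton_iff]
      constructor
      · rintro ⟨rfl | rfl, h⟩ <;> tauto
      · rintro rfl; simp [h2]]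
    simp
  · rw [show {w ∈ ({b, c} : Set V) | w < x} = ∅ from by
      ext w
      simp only [Set.sep_setOf, Set.mem_setOf_eq, Set.mem_insert_iff, Set.mem_singleton_iff]
      constructor
      · rintro ⟨rfl | rfl, h⟩ <;> tauto
      · rintro ⟨⟩]
    simp

lemma rank_injOn [LinearOrder V] {s : Set V} (hs : s.Finite) {x y : V} (hx : x ∈ s)
    (hy : y ∈ s) (h : {w ∈ s | w < x}.ncard = {w ∈ s | w < y}.ncard) : x = y := by
  by_contra hne
  have key : ∀ u v : V, u ∈ s → u < v → {w ∈ s | w < u}.ncard < {w ∈ s | w < v}.ncard := by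
    intro u v hu huv
    apply Set.ncard_lt_ncard
    · constructor
      · rintro w ⟨hw1, hw2⟩; exact ⟨hw1, hw2.trans huv⟩
      · intro hsub
        exact absurd (hsub ⟨hu, huv⟩).2 (lt_irrefl u)
    · exact hs.subset (Set.sep_subset _ _)
  rcases lt_or_gt_of_ne hne with hlt | hlt
  · exact absurd h (Nat.ne_of_lt (key x y hx hlt))
  · exact absurd h.symm (Nat.ne_of_lt (key y x hy hlt))

lemma mem3 {x a b c : V} (h : x ∈ ({a, b, c} : Set V)) : x = a ∨ x = b ∨ x = c := by
  simpa using h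

lemma mem4 {x a b c d : V} (h : x ∈ ({a, b, c, d} : Set V)) :
    x = a ∨ x = b ∨ x = c ∨ x = d := by simpa using h

lemma pair_eq_cases {a c a' c' : V} (hac : a ≠ c) (h : ({a, c} : Set V) = {a', c'}) :
    (a = a' ∧ c = c') ∨ (a = c' ∧ c = a') := by
  have ha : a = a' ∨ a = c' := by
    have : a ∈ ({a', c'} : Set V) := h ▸ (by simp)
    simpa using this
  have hc : c = a' ∨ c = c' := by
    have : c ∈ ({a', c'} : Set V) := h ▸ (by simp)
    simpa using this
  have ha' : a' = a ∨ a' = c := by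
    have : a' ∈ ({a, c} : Set V) := h ▸ (by simp)
    simpa using this
  have hc' : c' = a ∨ c' = c := by
    have : c' ∈ ({a, c} : Set V) := h ▸ (by simp)
    simpa using this
  rcases ha with rfl | rfl <;> rcases hc with rfl | rfl <;> tauto

lemma lt_bits {a c a' c' : V} [LinearOrder V] (hac : a ≠ c)
    (hcase : (a = a' ∧ c = c') ∨ (a = c' ∧ c = a'))
    (hbit : decide (a < c) = decide (a' < c')) : a = a' ∧ c = c' := by
  rcases hcase with ⟨rfl, rfl⟩ | ⟨rfl, rfl⟩
  · exact ⟨rfl, rfl⟩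
  · have hiff := decide_eq_decide.mp hbit
    rcases lt_trichotomy a c with h | h | h
    · exact absurd (hiff.mp h) (lt_asymm h)
    · exact absurd h hac
    · exact absurd (hiff.mpr h) (lt_asymm h)

end MyAux4

section MyAux5

variable {V : Type*}

noncomputable def triA {G : SimpleGraph V} (t : ↥(TriT G)) : V := t.2.choose
noncomputable def triB {G : SimpleGraph V} (t : ↥(TriT G)) : V :=
  t.2.choose_spec.choose
noncomputable def triC {G : SimpleGraph V} (t : ↥(TriT G)) : V :=
  t.2.choose_spec.choose_spec.choose

lemma tri_spec {G : SimpleGraph V} (t : ↥(TriT G)) :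
    (t : List V) = [triA t, triB t, triC t] ∧ G.Adj (triA t) (triB t) ∧
      G.Adj (triB t) (triC t) ∧ G.Adj (triA t) (triC t) :=
  t.2.choose_spec.choose_spec.choose_spec

lemma rank_of_triple [LinearOrder V] {a b c : V} (hab : a ≠ b) (hac : a ≠ c) (hbc : b ≠ c) :
    {w ∈ ({a, b, c} : Set V) | w < a}.ncard =
      (if b < a then 1 else 0) + (if c < a then 1 else 0) := by
  rw [show {w ∈ ({a, b, c} : Set V) | w < a} = {w ∈ ({b, c} : Set V) | w < a} from by
    ext w
    simp only [Set.sep_setOf, Set.mem_setOf_eq, Set.mem_insert_iff, Set.mem_singleton_iff]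
    constructor
    · rintro ⟨rfl | h, hw⟩
      · exact absurd hw (lt_irrefl w)
      · exact ⟨h, hw⟩
    · rintro ⟨h, hw⟩; exact ⟨Or.inr h, hw⟩]
  exact pair_filter_ncard hbc


lemma tri_inj_core [LinearOrder V] {G : SimpleGraph V} {a b c a' b' c' : V}
    (h1 : G.Adj a b) (h2 : G.Adj b c) (h3 : G.Adj a c)
    (h1' : G.Adj a' b') (h2' : G.Adj b' c') (h3' : G.Adj a' c')
    (hs : ({a, b, c} : Set V) = {a', b', c'})
    (hrk : ((if b < a then 1 else 0) + if c < a then 1 else 0 : ℕ) =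
      (if b' < a' then 1 else 0) + if c' < a' then 1 else 0)
    (hbit : decide (b < c) = decide (b' < c')) : a = a' ∧ b = b' ∧ c = c' := by
  have haa' : a = a' := by
    apply rank_injOn (Set.toFinite ({a, b, c} : Set V)) (by simp)
      (show a' ∈ ({a, b, c} : Set V) from hs ▸ (by simp))
    rw [show {w ∈ ({a, b, c} : Set V) | w < a'} = {w ∈ ({a', b', c'} : Set V) | w < a'}
      from by rw [hs]]
    rw [rank_of_triple h1.ne h3.ne h2.ne, rank_of_triple h1'.ne h3'.ne h2'.ne]
    exact hrk
  subst haa'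
  have hb' : b' = b ∨ b' = c := by
    have hmem : b' ∈ ({a, b, c} : Set V) := hs ▸ (by simp)
    rcases mem3 hmem with h | h | h
    · exact absurd h.symm h1'.ne
    · exact Or.inl h
    · exact Or.inr h
  have hc' : c' = b ∨ c' = c := by
    have hmem : c' ∈ ({a, b, c} : Set V) := hs ▸ (by simp)
    rcases mem3 hmem with h | h | h
    · exact absurd h.symm h3'.ne
    · exact Or.inl h
    · exact Or.inr h
  have hswap : (b = b' ∧ c = c') ∨ (b = c' ∧ c = b') := by
    have hbc' : b' ≠ c' := h2'.ne
    rcases hb' with rfl | rfl <;> rcases hc' with h | h <;> tauto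
  rcases hswap with ⟨hb, hc⟩ | ⟨hb, hc⟩
  · exact ⟨rfl, hb, hc⟩
  · subst hb; subst hc
    have hiff := decide_eq_decide.mp hbit
    rcases lt_trichotomy b c with h | h | h
    · exact absurd (hiff.mp h) (lt_asymm h)
    · exact absurd h h2.ne
    · exact absurd (hiff.mpr h) (lt_asymm h)

lemma card_TriT_le [Fintype V] [LinearOrder V] (G : SimpleGraph V) :
    Nat.card ↥(TriT G) ≤ 6 * subgraphCount G (SimpleGraph.cycleGraph 3) := by
  classical
  set C3 : Set (Set V) := {s : Set V | Nonempty (G.induce s ≃g SimpleGraph.cycleGraph 3)}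
    with hC3
  haveI : Finite ↥C3 := Subtype.finite
  have key : Nat.card ↥(TriT G) ≤ Nat.card (↥C3 × Fin 3 × Bool) := by
    apply Nat.card_le_card_of_injective
      (f := fun t => ((⟨{triA t, triB t, triC t}, by
          obtain ⟨hl, h1, h2, h3⟩ := tri_spec t
          exact nonempty_iso_c3 G h1 h2 h3⟩ : ↥C3),
        (⟨(if triB t < triA t then 1 else 0) + (if triC t < triA t then 1 else 0),
          by split_ifs <;> omega⟩ : Fin 3),
        decide (triB t < triC t)))
    intro t t' heq
    obtain ⟨hl, h1, h2, h3⟩ := tri_spec t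
    obtain ⟨hl', h1', h2', h3'⟩ := tri_spec t'
    simp only [Prod.mk.injEq, Subtype.mk.injEq, Fin.mk.injEq] at heq
    obtain ⟨hs, hrk, hbit⟩ := heq
    obtain ⟨e1, e2, e3⟩ := tri_inj_core h1 h2 h3 h1' h2' h3' hs hrk hbit
    apply Subtype.ext
    rw [hl, hl', e1, e2, e3]
  calc Nat.card ↥(TriT G) ≤ Nat.card (↥C3 × Fin 3 × Bool) := key
    _ = 6 * subgraphCount G (SimpleGraph.cycleGraph 3) := by
      rw [Nat.card_prod, Nat.card_prod,
        show Nat.card (Fin 3) = 3 from by simp,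
        show Nat.card Bool = 2 from by simp [Nat.card_eq_fintype_card],
        subgraphCount, ← Nat.card_coe_set_eq, hC3]
      ring

end MyAux5

section MyAux6

variable {V : Type*}

noncomputable def pickEl [Nonempty V] (s : Set V) : V := Classical.epsilon (· ∈ s)

lemma pickEl_mem [Nonempty V] {s : Set V} (h : s.Nonempty) : pickEl s ∈ s :=
  Classical.epsilon_spec h

noncomputable def ytA {G : SimpleGraph V} (t : ↥(YT G)) : V := t.2.choose
noncomputable def ytB {G : SimpleGraph V} (t : ↥(YT G)) : V := t.2.choose_spec.choose
noncomputable def ytC {G : SimpleGraph V} (t : ↥(YT G)) : V :=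
  t.2.choose_spec.choose_spec.choose

lemma yt_spec {G : SimpleGraph V} (t : ↥(YT G)) :
    (t : List V) = [ytA t, ytB t, ytC t] ∧ G.Adj (ytA t) (ytB t) ∧
      G.Adj (ytB t) (ytC t) ∧ ¬G.Adj (ytA t) (ytC t) ∧ ytA t ≠ ytC t ∧
      ytB t ≠ canonMid G (ytA t) (ytC t) :=
  t.2.choose_spec.choose_spec.choose_spec

lemma pairs_c4 {G : SimpleGraph V} {a b c d a' b' c' d' : V}
    (hnac : ¬G.Adj a c) (hac : a ≠ c)
    (h1' : G.Adj a' b') (h2' : G.Adj b' c') (h3' : G.Adj c' d') (h4' : G.Adj a' d')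
    (hs : ({a, b, c, d} : Set V) = {a', b', c', d'}) :
    ({a, c} : Set V) = {a', c'} ∨ ({a, c} : Set V) = {b', d'} := by
  have ha := mem4 (show a ∈ ({a', b', c', d'} : Set V) from hs ▸ (by simp))
  have hc := mem4 (show c ∈ ({a', b', c', d'} : Set V) from hs ▸ (by simp))
  rcases ha with rfl | rfl | rfl | rfl <;> rcases hc with rfl | rfl | rfl | rfl <;>
    first
      | (exact absurd rfl hac)
      | (exfalso; apply hnac;
          first
            | assumption
            | (apply G.adj_symm; assumption))
      | (left; ext x;
          simp only [Set.mem_insert_iff, Set.mem_singleton_iff]; all_goals tauto)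
      | (right; ext x;
          simp only [Set.mem_insert_iff, Set.mem_singleton_iff]; all_goals tauto)

lemma pairs_f4 {G : SimpleGraph V} {a b c d a' b' c' d' : V}
    (hnac : ¬G.Adj a c) (hac : a ≠ c)
    (h1' : G.Adj a' b') (h2' : G.Adj b' c') (h3' : G.Adj c' d') (h4' : G.Adj a' d')
    (h5' : G.Adj b' d')
    (hs : ({a, b, c, d} : Set V) = {a', b', c', d'}) :
    ({a, c} : Set V) = {a', c'} := by
  have ha := mem4 (show a ∈ ({a', b', c', d'} : Set V) from hs ▸ (by simp))
  have hc := mem4 (show c ∈ ({a', b', c', d'} : Set V) from hs ▸ (by simp))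
  rcases ha with rfl | rfl | rfl | rfl <;> rcases hc with rfl | rfl | rfl | rfl <;>
    first
      | (exact absurd rfl hac)
      | (exfalso; apply hnac;
          first
            | assumption
            | (apply G.adj_symm; assumption))
      | (ext x; simp only [Set.mem_insert_iff, Set.mem_singleton_iff]; all_goals tauto)

lemma y_inj_c4_core [Nonempty V] [LinearOrder V] {G : SimpleGraph V}
    {a b c d a' b' c' d' : V}
    (h1 : G.Adj a b) (h2 : G.Adj b c) (h3 : ¬G.Adj a c) (h4 : a ≠ c)
    (hd1 : G.Adj a d) (hd2 : G.Adj d c) (hbd : b ≠ d)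
    (h1' : G.Adj a' b') (h2' : G.Adj b' c') (h3' : ¬G.Adj a' c') (h4' : a' ≠ c')
    (hd1' : G.Adj a' d') (hd2' : G.Adj d' c') (hbd' : b' ≠ d')
    (hcan : canonMid G a c = d) (hcan' : canonMid G a' c' = d')
    (hs : ({a, b, c, d} : Set V) = {a', b', c', d'})
    (hbit1 : decide (pickEl ({a, b, c, d} : Set V) ∈ ({a, c} : Set V)) =
      decide (pickEl ({a', b', c', d'} : Set V) ∈ ({a', c'} : Set V)))
    (hbit2 : decide (a < c) = decide (a' < c')) :
    a = a' ∧ b = b' ∧ c = c' ∧ d = d' := by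
  rw [hs] at hbit1
  have hiff := decide_eq_decide.mp hbit1
  have hpairs := pairs_c4 h3 h4 h1' h2' hd2'.symm hd1' hs
  have hpair : ({a, c} : Set V) = {a', c'} := by
    rcases hpairs with h | h
    · exact h
    · exfalso
      have hm := pickEl_mem (show ({a', b', c', d'} : Set V).Nonempty from ⟨a', by simp⟩)
      rcases mem4 hm with hm' | hm' | hm' | hm'
      · have : pickEl ({a', b', c', d'} : Set V) ∈ ({a, c} : Set V) :=
          hiff.mpr (by rw [hm']; simp)
        rw [h, hm'] at this
        rcases mem4 (show a' ∈ ({b', d', b', d'} : Set V) from by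
          simpa using this) with h' | h' | h' | h'
        · exact h1'.ne h'
        · exact hd1'.ne h'
        · exact h1'.ne h'
        · exact hd1'.ne h'
      · have : pickEl ({a', b', c', d'} : Set V) ∈ ({a', c'} : Set V) :=
          hiff.mp (by rw [h, hm']; simp)
        rw [hm'] at this
        rcases (by simpa using this : b' = a' ∨ b' = c') with h' | h'
        · exact h1'.ne h'.symm
        · exact h2'.ne h'
      · have : pickEl ({a', b', c', d'} : Set V) ∈ ({a, c} : Set V) :=
          hiff.mpr (by rw [hm']; simp)
        rw [h, hm'] at this
        rcases (by simpa using this : c' = b' ∨ c' = d') with h' | h'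
        · exact h2'.ne h'.symm
        · exact hd2'.ne h'.symm
      · have : pickEl ({a', b', c', d'} : Set V) ∈ ({a', c'} : Set V) :=
          hiff.mp (by rw [h, hm']; simp)
        rw [hm'] at this
        rcases (by simpa using this : d' = a' ∨ d' = c') with h' | h'
        · exact hd1'.ne h'.symm
        · exact hd2'.ne h'
  obtain ⟨haa, hcc⟩ := lt_bits h4 (pair_eq_cases h4 hpair) hbit2
  subst haa; subst hcc
  have hdd : d = d' := by rw [← hcan, ← hcan']
  subst hdd
  refine ⟨rfl, ?_, rfl, rfl⟩
  have hmem := mem4 (show b' ∈ ({a, b, c, d} : Set V) from hs ▸ (by simp))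
  rcases hmem with h' | h' | h' | h'
  · exact absurd h'.symm h1'.ne
  · exact h'.symm
  · exact absurd h' h2'.ne
  · exact absurd h' hbd'

lemma y_inj_f4_core [Nonempty V] [LinearOrder V] {G : SimpleGraph V}
    {a b c d a' b' c' d' : V}
    (h2' : G.Adj b' c') (h4 : a ≠ c) (h3 : ¬G.Adj a c)
    (h1' : G.Adj a' b') (h4' : a' ≠ c')
    (hd1' : G.Adj a' d') (hd2' : G.Adj d' c') (hbd' : G.Adj b' d')
    (hcan : canonMid G a c = d) (hcan' : canonMid G a' c' = d')
    (hs : ({a, b, c, d} : Set V) = {a', b', c', d'})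
    (hbit2 : decide (a < c) = decide (a' < c')) :
    a = a' ∧ b = b' ∧ c = c' ∧ d = d' := by
  have hpair := pairs_f4 h3 h4 h1' h2' hd2'.symm hd1' hbd' hs
  obtain ⟨haa, hcc⟩ := lt_bits h4 (pair_eq_cases h4 hpair) hbit2
  subst haa; subst hcc
  have hdd : d = d' := by rw [← hcan, ← hcan']
  subst hdd
  refine ⟨rfl, ?_, rfl, rfl⟩
  have hmem := mem4 (show b' ∈ ({a, b, c, d} : Set V) from hs ▸ (by simp))
  rcases hmem with h' | h' | h' | h'
  · exact absurd h'.symm h1'.ne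
  · exact h'.symm
  · exact absurd h' h2'.ne
  · exact absurd h' hbd'.ne

end MyAux6

section MyAux7

variable {V : Type*}

lemma quad_comm {a b c d : V} : ({b, a, d, c} : Set V) = {a, b, c, d} := by
  ext x; simp only [Set.mem_insert_iff, Set.mem_singleton_iff]; tauto

lemma card_YT_le [Fintype V] [LinearOrder V] (G : SimpleGraph V) :
    Nat.card ↥(YT G) ≤ 4 * subgraphCount G (SimpleGraph.cycleGraph 4) +
      2 * subgraphCount G F4 := by
  classical
  rcases isEmpty_or_nonempty V with hV | hV
  · haveI : IsEmpty ↥(YT G) := ⟨fun t => hV.elim t.2.choose⟩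
    rw [Nat.card_of_isEmpty]
    exact Nat.zero_le _
  set C4s : Set (Set V) := {s | Nonempty (G.induce s ≃g SimpleGraph.cycleGraph 4)} with hC4
  set F4s : Set (Set V) := {s | Nonempty (G.induce s ≃g F4)} with hF4
  haveI : Finite ↥C4s := Subtype.finite
  haveI : Finite ↥F4s := Subtype.finite
  have key : Nat.card ↥(YT G) ≤ Nat.card ((↥C4s × Bool × Bool) ⊕ (↥F4s × Bool)) := by
    apply Nat.card_le_card_of_injective (f := fun t =>
      if hadj : G.Adj (ytB t) (canonMid G (ytA t) (ytC t)) then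
        Sum.inr (⟨{ytB t, ytA t, canonMid G (ytA t) (ytC t), ytC t}, by
            obtain ⟨hl, h1, h2, h3, h4, h5⟩ := yt_spec t
            obtain ⟨hc1, hc2⟩ := canonMid_spec h1 h2
            exact nonempty_iso_f4 G h1.symm hc1 hc2 h2 hadj h3 h4⟩,
          decide (ytA t < ytC t))
      else
        Sum.inl (⟨{ytA t, ytB t, ytC t, canonMid G (ytA t) (ytC t)}, by
            obtain ⟨hl, h1, h2, h3, h4, h5⟩ := yt_spec t
            obtain ⟨hc1, hc2⟩ := canonMid_spec h1 h2
            exact nonempty_iso_c4 G h1 h2 hc2.symm hc1 h3 hadj h4 h5⟩,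
          decide (pickEl ({ytA t, ytB t, ytC t, canonMid G (ytA t) (ytC t)} : Set V) ∈
            ({ytA t, ytC t} : Set V)),
          decide (ytA t < ytC t)))
    intro t t' heq
    dsimp only at heq
    obtain ⟨hl, h1, h2, h3, h4, h5⟩ := yt_spec t
    obtain ⟨hc1, hc2⟩ := canonMid_spec h1 h2
    obtain ⟨hl', h1', h2', h3', h4', h5'⟩ := yt_spec t'
    obtain ⟨hc1', hc2'⟩ := canonMid_spec h1' h2'
    by_cases hadj : G.Adj (ytB t) (canonMid G (ytA t) (ytC t))
    · by_cases hadj' : G.Adj (ytB t') (canonMid G (ytA t') (ytC t'))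
      · rw [dif_pos hadj, dif_pos hadj'] at heq
        simp only [Sum.inr.injEq, Prod.mk.injEq, Subtype.mk.injEq] at heq
        obtain ⟨hs, hbit2⟩ := heq
        have hs2 : ({ytA t, ytB t, ytC t, canonMid G (ytA t) (ytC t)} : Set V) =
            {ytA t', ytB t', ytC t', canonMid G (ytA t') (ytC t')} := by
          calc ({ytA t, ytB t, ytC t, canonMid G (ytA t) (ytC t)} : Set V)
              = {ytB t, ytA t, canonMid G (ytA t) (ytC t), ytC t} := quad_comm.symm
            _ = {ytB t', ytA t', canonMid G (ytA t') (ytC t'), ytC t'} := hs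
            _ = {ytA t', ytB t', ytC t', canonMid G (ytA t') (ytC t')} := quad_comm
        obtain ⟨e1, e2, e3, -⟩ := y_inj_f4_core h2' h4 h3 h1' h4' hc1' hc2' hadj'
          rfl rfl hs2 hbit2
        apply Subtype.ext
        rw [hl, hl', e1, e2, e3]
      · rw [dif_pos hadj, dif_neg hadj'] at heq
        exact absurd heq (by simp)
    · by_cases hadj' : G.Adj (ytB t') (canonMid G (ytA t') (ytC t'))
      · rw [dif_neg hadj, dif_pos hadj'] at heq
        exact absurd heq (by simp)
      · rw [dif_neg hadj, dif_neg hadj'] at heq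
        simp only [Sum.inl.injEq, Prod.mk.injEq, Subtype.mk.injEq] at heq
        obtain ⟨hs, hbit1, hbit2⟩ := heq
        obtain ⟨e1, e2, e3, -⟩ := y_inj_c4_core h1 h2 h3 h4 hc1 hc2 h5
          h1' h2' h3' h4' hc1' hc2' h5' rfl rfl hs hbit1 hbit2
        apply Subtype.ext
        rw [hl, hl', e1, e2, e3]
  calc Nat.card ↥(YT G) ≤ Nat.card ((↥C4s × Bool × Bool) ⊕ (↥F4s × Bool)) := key
    _ = 4 * subgraphCount G (SimpleGraph.cycleGraph 4) + 2 * subgraphCount G F4 := by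
      rw [Nat.card_sum, Nat.card_prod, Nat.card_prod, Nat.card_prod,
        show Nat.card Bool = 2 from by simp [Nat.card_eq_fintype_card],
        subgraphCount, subgraphCount, ← Nat.card_coe_set_eq, ← Nat.card_coe_set_eq,
        hC4, hF4]
      ring

end MyAux7

/-- Lemma 3.6: for a finite simple graph `G`,
`rank EMH_{2,2}(G) ≤ 6·c(G,C₃) + 4·c(G,C₄) + 2·c(G,F₄)`. -/
theorem rank_emh22_le {V : Type*} [Fintype V] (G : SimpleGraph V) :
    Module.finrank ℤ (EMHkk G 2) ≤
      6 * subgraphCount G (SimpleGraph.cycleGraph 3) +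
      4 * subgraphCount G (SimpleGraph.cycleGraph 4) +
      2 * subgraphCount G F4 := by
  classical
  letI : LinearOrder V := LinearOrder.lift' (Fintype.equivFin V) (Fintype.equivFin V).injective
  calc Module.finrank ℤ (EMHkk G 2) ≤ Nat.card ↥(TriT G ∪ YT G) := finrank_le_card_S G
    _ = (TriT G ∪ YT G).ncard := Nat.card_coe_set_eq _
    _ ≤ (TriT G).ncard + (YT G).ncard := Set.ncard_union_le _ _
    _ = Nat.card ↥(TriT G) + Nat.card ↥(YT G) := by
        rw [Nat.card_coe_set_eq, Nat.card_coe_set_eq]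
    _ ≤ 6 * subgraphCount G (SimpleGraph.cycleGraph 3) +
        (4 * subgraphCount G (SimpleGraph.cycleGraph 4) + 2 * subgraphCount G F4) :=
      Nat.add_le_add (card_TriT_le G) (card_YT_le G)
    _ = 6 * subgraphCount G (SimpleGraph.cycleGraph 3) +
        4 * subgraphCount G (SimpleGraph.cycleGraph 4) + 2 * subgraphCount G F4 := by ring
end

section
/- Let G be a finite simple graph, k ≥ 1, and let Z = {x̄ ∈ ET_{k,k}(G) : ∂_{k,k}(x̄) = 0}; equivalently, Z is the set of injective (k+1)-tuples (x_0,…,x_k) of vertices with x_i adjacent to x_{i+1} for all 0 ≤ i ≤ k−1 and x_{i−1} adjacent to x_{i+1} for all 1 ≤ i ≤ k−1. Then (k+1)!·c(G,Δ_{k+1}) ≤ |Z|, i.e., c(G,Δ_{k+1}) ≤ ⌊|Z|/(k+1)!⌋, where Δ_{k+1} is the complete graph on k+1 vertices. -/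
open scoped Classical

variable {V : Type*}

section Aux

variable {V : Type*}

private lemma mlen_of_chain' (G : SimpleGraph V) :
    ∀ l : List V, l.Chain' G.Adj → mlen G l = ((l.length - 1 : ℕ) : ℕ∞)
  | [], _ => by simp [mlen]
  | [_], _ => by simp [mlen]
  | a :: b :: t, h => by
    obtain ⟨hab, ht⟩ := List.isChain_cons_cons.1 h
    rw [mlen, mlen_of_chain' G (b :: t) ht, SimpleGraph.edist_eq_one_iff_adj.2 hab]
    simp only [List.length_cons, Nat.add_sub_cancel]
    push_cast
    ring

private lemma clique_list_mem_Z (G : SimpleGraph V) (k : ℕ) (hk : 1 ≤ k) (l : List V)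
    (hlen : l.length = k + 1) (hnd : l.Nodup) (hadj : l.Pairwise G.Adj) :
    l ∈ etrails G k k ∧ bdry G k (Finsupp.single l 1) = 0 := by
  have hchain : l.Chain' G.Adj := hadj.isChain
  have hml : mlen G l = (k : ℕ∞) := by
    rw [mlen_of_chain' G l hchain, hlen]; simp
  refine ⟨⟨⟨hlen, ?_, hml⟩, hnd⟩, ?_⟩
  · exact List.IsChain.imp (fun a b hab => ⟨hab.ne, hab.reachable⟩) hchain
  · have hb : bdry G k (Finsupp.single l 1) = bdryElt G k l := by
      rw [bdry, Finsupp.lsum_single, LinearMap.toSpanSingleton_apply_one]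
    rw [hb, bdryElt]
    apply Finset.sum_eq_zero
    intro i hi
    rw [Finset.mem_Ioo] at hi
    have hilt : i < l.length := lt_of_lt_of_le hi.2 (Nat.sub_le _ _)
    have hlen' : (l.eraseIdx i).length = k := by
      rw [List.length_eraseIdx, if_pos hilt, hlen]; omega
    have hml' : mlen G (l.eraseIdx i) = ((k - 1 : ℕ) : ℕ∞) := by
      rw [mlen_of_chain' G _ ((hadj.sublist (List.eraseIdx_sublist l i)).isChain), hlen']
    rw [if_neg]
    rw [hml']
    intro hcast
    have : k - 1 = k := Nat.cast_injective hcast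
    omega

private lemma subgraphCount_top_le (G : SimpleGraph V) [Fintype V] (k : ℕ) :
    subgraphCount G (⊤ : SimpleGraph (Fin (k + 1))) ≤ (G.cliqueFinset (k + 1)).card := by
  classical
  rw [subgraphCount]
  have hinj : Set.InjOn (fun s : Set V => s.toFinset)
      {s : Set V | Nonempty ((G.induce s) ≃g (⊤ : SimpleGraph (Fin (k + 1))))} := by
    intro s _ t _ h
    simpa using congrArg (fun u : Finset V => (u : Set V)) h
  rw [← Set.ncard_image_of_injOn hinj]
  rw [← Set.ncard_coe_finset]
  apply Set.ncard_le_ncard _ (Set.toFinite _)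
  rintro F ⟨s, ⟨e⟩, rfl⟩
  simp only [Finset.coe_sort_coe, Set.mem_setOf_eq] at *
  rw [Finset.mem_coe, SimpleGraph.mem_cliqueFinset_iff, SimpleGraph.isNClique_iff]
  constructor
  · intro a ha b hb hab
    simp only [Finset.mem_coe, Set.mem_toFinset] at ha hb
    have hne : (⟨a, ha⟩ : s) ≠ ⟨b, hb⟩ := fun h => hab (congrArg Subtype.val h)
    have htop : (⊤ : SimpleGraph (Fin (k + 1))).Adj (e ⟨a, ha⟩) (e ⟨b, hb⟩) := by
      simp only [SimpleGraph.top_adj]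
      exact fun h => hne (e.toEquiv.injective h)
    exact e.map_adj_iff.1 htop
  · rw [Set.toFinset_card, Fintype.card_congr e.toEquiv, Fintype.card_fin]

private lemma card_perms (s : Finset V) [DecidableEq V] :
    (s.toList.permutations).toFinset.card = (s.card).factorial := by
  rw [List.toFinset_card_of_nodup (List.nodup_permutations _ s.nodup_toList),
    List.length_permutations, Finset.length_toList]

end Aux

/-- Lemma 3.7: let `Z ⊆ ET_{k,k}(G)` be the set of generators with
vanishing differential.  Then `(k+1)!·c(G,Δ_{k+1}) ≤ |Z|`, i.e.
`c(G,Δ_{k+1}) ≤ ⌊|Z|/(k+1)!⌋`, where `Δ_{k+1}` is the complete graph on `k+1` vertices. -/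

theorem clique_count_le_zero_differential_generators {V : Type*} [Fintype V]
    (G : SimpleGraph V) (k : ℕ) (hk : 1 ≤ k) :
    (k + 1).factorial * subgraphCount G (⊤ : SimpleGraph (Fin (k + 1))) ≤
      Set.ncard {l : List V | l ∈ etrails G k k ∧ bdry G k (Finsupp.single l 1) = 0} ∧
    subgraphCount G (⊤ : SimpleGraph (Fin (k + 1))) ≤
      Set.ncard {l : List V | l ∈ etrails G k k ∧ bdry G k (Finsupp.single l 1) = 0} /
        (k + 1).factorial := by
  classical
  set Z : Set (List V) :=
    {l : List V | l ∈ etrails G k k ∧ bdry G k (Finsupp.single l 1) = 0} with hZ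
  set TF : Finset (List V) :=
    (G.cliqueFinset (k + 1)).biUnion (fun s => (s.toList.permutations).toFinset) with hTF
  have hZfin : Z.Finite := by
    apply Set.Finite.subset ((Set.finite_univ (α := Fin (k+1) → V)).image List.ofFn)
    rintro l ⟨⟨⟨hlen, -⟩, -⟩, -⟩
    refine ⟨fun i => l.get (Fin.cast hlen.symm i), trivial, ?_⟩
    apply List.ext_getElem
    · simpa using hlen.symm
    · intro i h1 h2
      rw [List.getElem_ofFn]
      rfl
  have hTFsub : (TF : Set (List V)) ⊆ Z := by
    intro l hl
    rw [Finset.mem_coe, hTF, Finset.mem_biUnion] at hl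
    obtain ⟨s, hs, hls⟩ := hl
    rw [List.mem_toFinset, List.mem_permutations] at hls
    replace hs := (SimpleGraph.isNClique_iff G).1 (SimpleGraph.mem_cliqueFinset_iff.1 hs)
    have hnd : l.Nodup := hls.nodup_iff.2 s.nodup_toList
    have hlen : l.length = k + 1 := by
      rw [hls.length_eq, Finset.length_toList, hs.2]
    have hadj : l.Pairwise G.Adj := by
      refine List.Pairwise.imp_of_mem ?_ hnd
      intro a b ha hb hab
      exact hs.1 (by simpa using hls.subset ha) (by simpa using hls.subset hb) hab
    exact clique_list_mem_Z G k hk l hlen hnd hadj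
  have hTFcard : TF.card = (G.cliqueFinset (k + 1)).card * (k + 1).factorial := by
    rw [hTF, Finset.card_biUnion, Finset.sum_congr rfl
      (fun s hs => by
        rw [card_perms s, (SimpleGraph.mem_cliqueFinset_iff.1 hs).2]),
      Finset.sum_const, smul_eq_mul]
    intro s hs t ht hst
    rw [Function.onFun_apply, Finset.disjoint_left]
    intro l hls hlt
    rw [List.mem_toFinset, List.mem_permutations] at hls hlt
    refine hst (Finset.ext fun x => ?_)
    rw [← Finset.mem_toList, ← hls.mem_iff, hlt.mem_iff, Finset.mem_toList]
  have hmain : (k + 1).factorial * subgraphCount G (⊤ : SimpleGraph (Fin (k + 1))) ≤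
      Set.ncard Z := by
    calc (k + 1).factorial * subgraphCount G (⊤ : SimpleGraph (Fin (k + 1)))
        ≤ (k + 1).factorial * (G.cliqueFinset (k + 1)).card :=
          Nat.mul_le_mul_left _ (subgraphCount_top_le G k)
      _ = TF.card := by rw [hTFcard, Nat.mul_comm]
      _ = Set.ncard (TF : Set (List V)) := (Set.ncard_coe_finset _).symm
      _ ≤ Set.ncard Z := Set.ncard_le_ncard hTFsub hZfin
  exact ⟨hmain, (Nat.le_div_iff_mul_le (Nat.factorial_pos _)).2
    (by rw [Nat.mul_comm]; exact hmain)⟩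
end

section
/- Let G=(V,E) be a simple graph and suppose x̄=(x_0,…,x_k) ∈ ET_{k,k}(G) satisfies ∂_{k,k}(x̄) = 0. Then the induced subgraph of G on the landmark set L(x̄) = {x_0,…,x_k} contains every edge {x_i,x_{i+1}} for 0 ≤ i ≤ k−1 and every edge {x_{i−1},x_{i+1}} for 1 ≤ i ≤ k−1; that is, G|_{L(x̄)} belongs to the class Γ(𝓗({x̄})) of the complete class graph 𝓗({x̄}) = (L(x̄), E_S, E_B) with mandatory edges E_S = {{x_i,x_{i+1}} : 0 ≤ i ≤ k−1} ∪ {{x_{i−1},x_{i+1}} : 1 ≤ i ≤ k−1} and optional edges E_B all remaining pairs of L(x̄). -/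
open scoped Classical

variable {V : Type*}

section Aux

lemma mlen_cons_cons (G : SimpleGraph V) (a b : V) (t : List V) :
    mlen G (a :: b :: t) = G.edist a b + mlen G (b :: t) := rfl

lemma mlen_junction (G : SimpleGraph V) :
    ∀ (p : List V) (a b c : V) (s : List V),
      mlen G (p ++ a :: b :: c :: s) + G.edist a c
        = mlen G (p ++ a :: c :: s) + G.edist a b + G.edist b c
  | [], a, b, c, s => by
      simp only [List.nil_append, mlen_cons_cons]
      ring
  | [q], a, b, c, s => by
      simp only [List.cons_append, List.nil_append, mlen_cons_cons]
      ring
  | q :: r :: p, a, b, c, s => by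
      have ih := mlen_junction G (r :: p) a b c s
      simp only [List.cons_append] at ih ⊢
      rw [mlen_cons_cons, mlen_cons_cons G q r, add_assoc (G.edist q r), ih]
      ring

lemma mlen_lower (G : SimpleGraph V) :
    ∀ l : List V, IsTrailList G l → ((l.length - 1 : ℕ) : ℕ∞) ≤ mlen G l
  | [] => by intro _; simp [mlen]
  | [_] => by intro _; simp [mlen]
  | a :: b :: t => by
      intro h
      rw [IsTrailList, List.Chain', List.isChain_cons_cons] at h
      have h1 : (1 : ℕ∞) ≤ G.edist a b := by
        rw [Order.one_le_iff_pos]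
        exact SimpleGraph.edist_pos_of_ne h.1.1
      have h2 := mlen_lower G (b :: t) h.2
      rw [mlen_cons_cons]
      calc ((( a :: b :: t).length - 1 : ℕ) : ℕ∞) = 1 + ((b :: t).length - 1 : ℕ) := by
            simp; rw [add_comm]
        _ ≤ G.edist a b + mlen G (b :: t) := add_le_add h1 h2

lemma mlen_eq_chain (G : SimpleGraph V) :
    ∀ l : List V, IsTrailList G l → mlen G l = ((l.length - 1 : ℕ) : ℕ∞) →
      l.Chain' fun a b => G.edist a b = 1
  | [] => by intro _ _; exact List.isChain_nil
  | [_] => by intro _ _; exact List.isChain_singleton _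
  | a :: b :: t => by
      intro h hm
      rw [IsTrailList, List.Chain', List.isChain_cons_cons] at h
      rw [mlen_cons_cons] at hm
      have h1 : (1 : ℕ∞) ≤ G.edist a b := by
        rw [Order.one_le_iff_pos]
        exact SimpleGraph.edist_pos_of_ne h.1.1
      have h2 := mlen_lower G (b :: t) h.2
      have hfin : ((t.length : ℕ∞) + 1) ≠ ⊤ := by exact_mod_cast ENat.coe_ne_top (t.length + 1)
      have hab : G.edist a b ≠ ⊤ := fun hh => hfin (by rw [hh, top_add] at hm; exact hm.symm)
      have hbt : mlen G (b :: t) ≠ ⊤ := fun hh => hfin (by rw [hh, add_top] at hm; exact hm.symm)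
      lift G.edist a b to ℕ using hab with d hd
      lift mlen G (b :: t) to ℕ using hbt with m hmn
      have hlen : ((a :: b :: t).length - 1 : ℕ) = t.length + 1 := by simp
      have hlen2 : ((b :: t).length - 1 : ℕ) = t.length := by simp
      rw [hlen] at hm
      rw [← Nat.cast_add, Nat.cast_inj] at hm
      rw [Nat.one_le_cast] at h1
      rw [hlen2, Nat.cast_le] at h2
      have hd1 : d = 1 := by omega
      have hm1 : m = t.length := by omega
      rw [List.Chain', List.isChain_cons_cons]
      refine ⟨by rw [← hd, hd1, Nat.cast_one], ?_⟩
      exact mlen_eq_chain G (b :: t) h.2 (by rw [← hmn, hm1, hlen2])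

lemma eraseIdx_ne_eraseIdx {α : Type*} {l : List α} (h : l.Nodup) {i j : ℕ}
    (hi : i < l.length) (hne : i ≠ j) : l.eraseIdx i ≠ l.eraseIdx j := by
  intro heq
  have hmem : l[i] ∈ l.eraseIdx j := List.mem_eraseIdx_iff_getElem.mpr ⟨i, hi, hne, rfl⟩
  rw [← heq] at hmem
  obtain ⟨m, hm, hmi, hval⟩ := List.mem_eraseIdx_iff_getElem.mp hmem
  exact hmi (h.getElem_inj_iff.mp hval)

lemma decomp_list {α : Type*} (l : List α) (j : ℕ) (h : j + 2 < l.length) :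
    l = l.take j ++ l[j] :: l[j+1] :: l[j+2] :: l.drop (j+3) ∧
    l.eraseIdx (j+1) = l.take j ++ l[j] :: l[j+2] :: l.drop (j+3) := by
  have h1 : l.drop j = l[j] :: l.drop (j+1) := List.drop_eq_getElem_cons (by omega)
  have h2 : l.drop (j+1) = l[j+1] :: l.drop (j+2) := List.drop_eq_getElem_cons (by omega)
  have h3 : l.drop (j+2) = l[j+2] :: l.drop (j+3) := List.drop_eq_getElem_cons (by omega)
  constructor
  · conv_lhs => rw [← List.take_append_drop j l, h1, h2, h3]
  · have h4 : l.take (j+1) = l.take j ++ [l[j]] := by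
      rw [List.take_succ, List.getElem?_eq_getElem (by omega : j < l.length)]
      simp
    rw [List.eraseIdx_eq_take_drop_succ, h4, h3, List.append_assoc, List.singleton_append]

lemma mlen_eraseIdx_ne (G : SimpleGraph V) {k : ℕ} {l : List V} (hnd : l.Nodup)
    (hlen : l.length = k + 1)
    (hcyc : bdry G k (Finsupp.single l 1) = 0) {i : ℕ} (h0 : 0 < i) (hik : i < k) :
    mlen G (l.eraseIdx i) ≠ ((k : ℕ) : ℕ∞) := by
  intro hml
  have hb : bdryElt G k l = 0 := by
    have h' := hcyc
    rw [bdry, Finsupp.lsum_single, LinearMap.toSpanSingleton_apply, one_smul] at h'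
    exact h'
  have hval := DFunLike.congr_fun hb (l.eraseIdx i)
  rw [bdryElt, Finsupp.finset_sum_apply] at hval
  rw [Finset.sum_eq_single_of_mem i (by rw [hlen]; simp; omega)] at hval
  · rw [if_pos hml, Finsupp.coe_zero, Pi.zero_apply, Finsupp.smul_apply,
      Finsupp.single_eq_same, smul_eq_mul, mul_one] at hval
    exact pow_ne_zero i (by norm_num : (-1 : ℤ) ≠ 0) hval
  · intro j hj hji
    rw [Finset.mem_Ioo, hlen] at hj
    split_ifs
    · rw [Finsupp.smul_apply, Finsupp.single_apply,
        if_neg (eraseIdx_ne_eraseIdx hnd (by omega) hji)]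
      simp
    · simp

end Aux

/-- Lemma 3.8: if `x̄ = (x_0,…,x_k) ∈ ET_{k,k}(G)` has `∂_{k,k}(x̄) = 0`,
then the induced subgraph of `G` on the landmark set contains all consecutive edges
`{x_i, x_{i+1}}` and all "skip" edges `{x_{i-1}, x_{i+1}}`; that is, `G|_{L(x̄)}` belongs to
the class `Γ(𝓗({x̄}))` of the complete class graph whose mandatory edge set `E_S` consists
of exactly those edges (all remaining pairs of landmarks being optional). -/
theorem class_graph_of_single_generator_cycle {V : Type*} (G : SimpleGraph V) (k : ℕ)
    (x : Fin (k + 1) → V) (hx : List.ofFn x ∈ etrails G k k)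
    (hcyc : bdry G k (Finsupp.single (List.ofFn x) 1) = 0) :
    (∀ i : Fin k, G.Adj (x i.castSucc) (x i.succ)) ∧
    (∀ i : ℕ, ∀ _hi1 : 1 ≤ i, ∀ _hi2 : i ≤ k - 1,
      G.Adj (x ⟨i - 1, by omega⟩) (x ⟨i + 1, by omega⟩)) := by
  set l := List.ofFn x with hl
  obtain ⟨⟨hlen, htr, hml⟩, hnd⟩ := hx
  have hlength : l.length = k + 1 := by simp [hl]
  have hchain := mlen_eq_chain G l htr (by rw [hlength]; simpa using hml)
  have e1 : ∀ (i : ℕ) (h : i < k),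
      G.edist (x ⟨i, by omega⟩) (x ⟨i+1, by omega⟩) = 1 := by
    intro i h
    have hh := List.isChain_iff_getElem.mp hchain i (by rw [hlength]; omega)
    simpa only [hl, List.getElem_ofFn] using hh
  constructor
  · intro i
    exact SimpleGraph.edist_eq_one_iff_adj.mp (e1 i.1 i.isLt)
  · intro i hi1 hi2
    obtain ⟨j, rfl⟩ : ∃ j, i = j + 1 := ⟨i - 1, by omega⟩
    have hjk : j + 2 ≤ k := by omega
    simp only [Nat.add_sub_cancel]
    obtain ⟨hdec1, hdec2⟩ := decomp_list l j (by omega)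
    have hj := mlen_junction G (l.take j) (l[j]'(by omega)) (l[j+1]'(by omega))
      (l[j+2]'(by omega)) (l.drop (j+3))
    rw [← hdec1, ← hdec2] at hj
    have hg0 : l[j]'(by omega) = x ⟨j, by omega⟩ := by simp only [hl, List.getElem_ofFn]
    have hg1 : l[j+1]'(by omega) = x ⟨j+1, by omega⟩ := by simp only [hl, List.getElem_ofFn]
    have hg2 : l[j+2]'(by omega) = x ⟨j+2, by omega⟩ := by simp only [hl, List.getElem_ofFn]
    have ej1 : G.edist (l[j]'(by omega)) (l[j+1]'(by omega)) = 1 := by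
      rw [hg0, hg1]; exact e1 j (by omega)
    have ej2 : G.edist (l[j+1]'(by omega)) (l[j+2]'(by omega)) = 1 := by
      rw [hg1, hg2]; exact e1 (j+1) (by omega)
    have h2 : G.edist (l[j]'(by omega)) (l[j+2]'(by omega)) ≤ 2 := by
      calc G.edist (l[j]'(by omega)) (l[j+2]'(by omega)) ≤ G.edist (l[j]'(by omega)) (l[j+1]'(by omega))
              + G.edist (l[j+1]'(by omega)) (l[j+2]'(by omega)) := SimpleGraph.edist_triangle
        _ = 2 := by rw [ej1, ej2]; norm_num
    have h0e : G.edist (l[j]'(by omega)) (l[j+2]'(by omega)) ≠ 0 := by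
      rw [ne_eq, SimpleGraph.edist_eq_zero_iff]
      intro hcc
      have := hnd.getElem_inj_iff.mp hcc
      omega
    have hetop : G.edist (l[j]'(by omega)) (l[j+2]'(by omega)) ≠ ⊤ := fun hh => by
      rw [hh] at h2
      exact (by norm_num : ((2 : ℕ∞) ≠ ⊤)) (top_le_iff.mp h2)
    obtain ⟨n, hn⟩ := WithTop.ne_top_iff_exists.mp hetop
    rw [show (WithTop.some n : ℕ∞) = ((n : ℕ) : ℕ∞) from congrFun ENat.some_eq_coe n] at hn
    have hn2 : n ≤ 2 := by
      rw [← hn, show ((2:ℕ∞)) = ((2:ℕ):ℕ∞) by norm_num, Nat.cast_le] at h2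
      exact h2
    have hn0 : n ≠ 0 := by rw [← hn] at h0e; simpa using h0e
    have hn1 : n ≠ 2 := by
      intro hnn
      rw [hml, ej1, ej2, ← hn, hnn, add_assoc] at hj
      norm_num at hj
      have hcancel : ((k : ℕ) : ℕ∞) = mlen G (l.eraseIdx (j+1)) :=
        hj
      exact mlen_eraseIdx_ne G hnd hlength hcyc (by omega) (by omega) hcancel.symm
    have hne1 : n = 1 := by omega
    have hedist1 : G.edist (l[j]'(by omega)) (l[j+2]'(by omega)) = 1 := by
      rw [← hn, hne1, Nat.cast_one]
    have hadj := SimpleGraph.edist_eq_one_iff_adj.mp hedist1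
    rw [hg0, hg2] at hadj
    show G.Adj (x ⟨j, by omega⟩) (x ⟨j + 2, by omega⟩)
    exact hadj
end
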